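/- Let N ≥ 3, let λ be a nonzero real number, and let B = J_N(λ) be the N×N Jordan block with λ on the diagonal and 1 on the superdiagonal. Then for every integer L ≥ 0 and all nonzero real numbers u(0), u(1), …, u(L), the product (I + u(L)B)(I + u(L−1)B)⋯(I + u(1)B)(I + u(0)B) is not equal to the identity matrix. -/

import Mathlib

open Matrix MeasureTheory Polynomial

/-- The product `(I + u(l-1)B) ⋯ (I + u(1)B)(I + u(0)B)`. -/
noncomputable def prodCtrl {n : ℕ} (B : Matrix (Fin n) (Fin n) ℝ) (l : ℕ) (u : ℕ → ℝ) :
    Matrix (Fin n) (Fin n) ℝ :=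
  ((List.range l).reverse.map fun k => (1 : Matrix (Fin n) (Fin n) ℝ) + u k • B).prod

/-- `ξ` can be steered to `η` in the system `x(k+1) = (I + u(k)B) x(k)`. -/
noncomputable def steers {n : ℕ} (B : Matrix (Fin n) (Fin n) ℝ) (ξ η : Fin n → ℝ) : Prop :=
  ∃ l : ℕ, 1 ≤ l ∧ ∃ u : ℕ → ℝ, (prodCtrl B l u).mulVec ξ = η

/-- Near-controllability: outside two Lebesgue-null sets, any state can be steered to any state. -/
noncomputable def nearlyControllable {n : ℕ} (B : Matrix (Fin n) (Fin n) ℝ) : Prop :=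
  ∃ E F : Set (Fin n → ℝ), volume E = 0 ∧ volume F = 0 ∧
    ∀ ξ ∉ E, ∀ η ∉ F, steers B ξ η

/-- The matrix `[ξ, Bξ, B²ξ, …, B^{n-1}ξ]`. -/
noncomputable def ctrlMat {n : ℕ} (B : Matrix (Fin n) (Fin n) ℝ) (ξ : Fin n → ℝ) :
    Matrix (Fin n) (Fin n) ℝ :=
  Matrix.of fun i j => (B ^ (j : ℕ)).mulVec ξ i

/-- The `N × N` Jordan block with eigenvalue `lam`. -/
def jordanBlock (N : ℕ) (lam : ℝ) : Matrix (Fin N) (Fin N) ℝ :=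
  Matrix.of fun i j => if i = j then lam else if (j : ℕ) = (i : ℕ) + 1 then 1 else 0

/-- Block-diagonal Jordan matrix: `r` two-dimensional Jordan blocks with eigenvalues
`lam 0, …, lam (r-1)` followed by `1 × 1` blocks `lam r, …, lam (m-1)` (so `n = m + r`). -/
def pairJordan (n r : ℕ) (lam : ℕ → ℝ) : Matrix (Fin n) (Fin n) ℝ :=
  Matrix.of fun i j =>
    if (i : ℕ) = (j : ℕ) then
      (if (i : ℕ) < 2 * r then lam ((i : ℕ) / 2) else lam ((i : ℕ) - r))
    else if (j : ℕ) = (i : ℕ) + 1 ∧ (i : ℕ) < 2 * r ∧ (i : ℕ) % 2 = 0 then 1 else 0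

/-! ### Auxiliary lemmas -/

lemma jordanZero_apply {N : ℕ} (a k : Fin N) :
    jordanBlock N 0 a k = if (k : ℕ) = (a : ℕ) + 1 then 1 else 0 := by
  by_cases h1 : a = k
  · subst h1; simp [jordanBlock]
  · simp [jordanBlock, h1]

lemma jordanZero_pow {N : ℕ} (i : ℕ) (a b : Fin N) :
    ((jordanBlock N 0) ^ i) a b = if (b : ℕ) = (a : ℕ) + i then 1 else 0 := by
  induction i generalizing a with
  | zero => simp [Matrix.one_apply, Fin.ext_iff, eq_comm]
  | succ i ih =>
    rw [pow_succ']
    rw [Matrix.mul_apply]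
    simp only [jordanZero_apply, ite_mul, one_mul, zero_mul]
    by_cases h : (a : ℕ) + 1 < N
    · have : ∀ k : Fin N, ((k : ℕ) = (a : ℕ) + 1) ↔ k = ⟨(a : ℕ) + 1, h⟩ := by
        intro k; simp [Fin.ext_iff]
      simp only [this]
      rw [Finset.sum_ite_eq' Finset.univ (⟨(a : ℕ) + 1, h⟩ : Fin N)]
      simp only [Finset.mem_univ, if_true, ih]
      split_ifs with h1 h2 h2 <;> first | rfl | omega
    · rw [Finset.sum_eq_zero (fun k _ => by
        have := k.isLt; rw [if_neg (by omega)])]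
      rw [if_neg (by have := b.isLt; omega)]

lemma jordan_split (N : ℕ) (lam : ℝ) :
    jordanBlock N lam = lam • (1 : Matrix (Fin N) (Fin N) ℝ) + jordanBlock N 0 := by
  ext i j
  by_cases h : i = j
  · subst h; simp [jordanBlock, Matrix.one_apply]
  · simp [jordanBlock, Matrix.one_apply, h]

lemma aeval_entry {N : ℕ} (p : Polynomial ℝ) (i j : Fin N) (hi : (i : ℕ) = 0) :
    (Polynomial.aeval (jordanBlock N 0) p) i j = p.coeff (j : ℕ) := by
  rw [Polynomial.aeval_eq_sum_range]
  rw [Matrix.sum_apply]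
  simp only [Matrix.smul_apply, jordanZero_pow, hi, zero_add, smul_eq_mul, mul_ite, mul_one,
    mul_zero]
  rw [Finset.sum_ite_eq (Finset.range (p.natDegree + 1)) (j : ℕ)]
  split_ifs with h
  · rfl
  · rw [Polynomial.coeff_eq_zero_of_natDegree_lt]
    simp only [Finset.mem_range] at h; omega

lemma prodCtrl_zero {n : ℕ} (B : Matrix (Fin n) (Fin n) ℝ) (u : ℕ → ℝ) :
    prodCtrl B 0 u = 1 := by simp [prodCtrl]

lemma prodCtrl_succ {n : ℕ} (B : Matrix (Fin n) (Fin n) ℝ) (l : ℕ) (u : ℕ → ℝ) :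
    prodCtrl B (l + 1) u = ((1 : Matrix (Fin n) (Fin n) ℝ) + u l • B) * prodCtrl B l u := by
  simp [prodCtrl, List.range_succ]

lemma coeff_prod_lin (c : ℕ → ℝ) (n : ℕ) :
    (∏ k ∈ Finset.range n, (1 + Polynomial.C (c k) * Polynomial.X)).coeff 0 = 1 ∧
    ((∏ k ∈ Finset.range n, (1 + Polynomial.C (c k) * Polynomial.X)).coeff 1) ^ 2
      - 2 * (∏ k ∈ Finset.range n, (1 + Polynomial.C (c k) * Polynomial.X)).coeff 2
      = ∑ k ∈ Finset.range n, (c k) ^ 2 := by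
  induction n with
  | zero => simp [Polynomial.coeff_one]
  | succ n ih =>
    obtain ⟨h0, h12⟩ := ih
    rw [Finset.prod_range_succ]
    set Q := ∏ k ∈ Finset.range n, (1 + Polynomial.C (c k) * Polynomial.X) with hQ
    have e : ∀ m : ℕ, (Q * (1 + Polynomial.C (c n) * Polynomial.X)).coeff (m + 1)
        = Q.coeff (m + 1) + c n * Q.coeff m := by
      intro m
      rw [mul_add, mul_one, Polynomial.coeff_add, mul_comm (Polynomial.C (c n)) Polynomial.X,
        ← mul_assoc, Polynomial.coeff_mul_C, Polynomial.coeff_mul_X, mul_comm]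
    have e0 : (Q * (1 + Polynomial.C (c n) * Polynomial.X)).coeff 0 = Q.coeff 0 := by
      rw [mul_add, mul_one, Polynomial.coeff_add, mul_comm (Polynomial.C (c n)) Polynomial.X,
        ← mul_assoc, Polynomial.coeff_mul_C]
      simp
    refine ⟨by rw [e0, h0], ?_⟩
    have e1 := e 0
    have e2 := e 1
    norm_num at e1 e2
    rw [e1, e2, h0, Finset.sum_range_succ]
    nlinarith [h12]

/-- for a Jordan block of size `N ≥ 3` with nonzero eigenvalue, no product
`(I + u(L)B)⋯(I + u(0)B)` with all `u(k)` nonzero equals the identity. -/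
theorem stmt2 {N : ℕ} (hN : 3 ≤ N) (lam : ℝ) (hlam : lam ≠ 0) :
    ∀ (L : ℕ) (u : ℕ → ℝ), (∀ k ≤ L, u k ≠ 0) →
      prodCtrl (jordanBlock N lam) (L + 1) u ≠ 1 := by
  intro L u hu hcontra
  set a : ℕ → ℝ := fun k => 1 + u k * lam with ha
  -- each factor is a polynomial in the nilpotent part
  have hfac : ∀ k : ℕ, (1 : Matrix (Fin N) (Fin N) ℝ) + u k • jordanBlock N lam
      = Polynomial.aeval (jordanBlock N 0)
          (Polynomial.C (a k) + Polynomial.C (u k) * Polynomial.X) := by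
    intro k
    rw [jordan_split N lam]
    simp only [map_add, _root_.map_mul, Polynomial.aeval_C, Polynomial.aeval_X,
      Algebra.algebraMap_eq_smul_one, ha, smul_mul_assoc, one_mul]
    simp only [smul_add, smul_smul, add_smul, one_smul]
    abel
  have key : ∀ l : ℕ, prodCtrl (jordanBlock N lam) l u
      = Polynomial.aeval (jordanBlock N 0)
        (∏ k ∈ Finset.range l, (Polynomial.C (a k) + Polynomial.C (u k) * Polynomial.X)) := by
    intro l
    induction l with
    | zero => simp [prodCtrl_zero]
    | succ l ih =>
      rw [prodCtrl_succ, ih, hfac l, ← _root_.map_mul, mul_comm, ← Finset.prod_range_succ]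
  rw [key] at hcontra
  set P := ∏ k ∈ Finset.range (L + 1),
    (Polynomial.C (a k) + Polynomial.C (u k) * Polynomial.X) with hPdef
  have i0 : Fin N := ⟨0, by omega⟩
  have entry : ∀ (j : Fin N), P.coeff (j : ℕ) = (1 : Matrix (Fin N) (Fin N) ℝ) (⟨0, by omega⟩) j := by
    intro j
    rw [← hcontra, aeval_entry P ⟨0, by omega⟩ j rfl]
  have c0 : P.coeff 0 = 1 := by
    have := entry ⟨0, by omega⟩
    simpa [Matrix.one_apply] using this
  have c1 : P.coeff 1 = 0 := by
    have := entry ⟨1, by omega⟩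
    simpa [Matrix.one_apply, Fin.ext_iff] using this
  have c2 : P.coeff 2 = 0 := by
    have := entry ⟨2, by omega⟩
    simpa [Matrix.one_apply, Fin.ext_iff] using this
  have hprod : (∏ k ∈ Finset.range (L + 1), a k) = 1 := by
    rw [← c0, hPdef, Polynomial.coeff_zero_eq_eval_zero, Polynomial.eval_prod]
    exact Finset.prod_congr rfl fun k _ => by simp
  have hane : ∀ k ∈ Finset.range (L + 1), a k ≠ 0 := by
    intro k hk h
    exact one_ne_zero ((hprod.symm).trans (Finset.prod_eq_zero hk h))
  set c : ℕ → ℝ := fun k => u k / a k with hc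
  have hfact : P = ∏ k ∈ Finset.range (L + 1), (1 + Polynomial.C (c k) * Polynomial.X) := by
    have step : ∀ k ∈ Finset.range (L + 1),
        Polynomial.C (a k) + Polynomial.C (u k) * Polynomial.X
          = Polynomial.C (a k) * (1 + Polynomial.C (c k) * Polynomial.X) := by
      intro k hk
      have hk0 := hane k hk
      rw [mul_add, mul_one, ← mul_assoc, ← Polynomial.C_mul]
      congr 2
      simp only [hc]; congr 1; field_simp
    rw [hPdef, Finset.prod_congr rfl step, Finset.prod_mul_distrib, ← map_prod, hprod, Polynomial.C_1,
      one_mul]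
  obtain ⟨q0, q12⟩ := coeff_prod_lin c (L + 1)
  rw [← hfact, c1, c2] at q12
  have hsum : ∑ k ∈ Finset.range (L + 1), (c k) ^ 2 = 0 := by linarith
  have hc0 : c 0 = 0 := by
    have := (Finset.sum_eq_zero_iff_of_nonneg
      (fun k _ => sq_nonneg (c k))).mp hsum 0 (by simp)
    exact pow_eq_zero_iff (by norm_num) |>.mp this
  have hu0 : u 0 = 0 := by
    have ha0 : a 0 ≠ 0 := hane 0 (by simp)
    rcases div_eq_zero_iff.mp hc0 with h | h
    · exact h
    · exact absurd h ha0
  exact hu 0 (by omega) hu0
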